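/- The function Ψ which assigns to each integer n ≥ 2 the number of functions f : ℤ/nℤ → ℤ/nℤ representable by a polynomial in (ℤ/nℤ)[x] is multiplicative: if gcd(m,n) = 1 then Ψ(mn) = Ψ(m)·Ψ(n). -/
import Mathlib

/-- The number of polyfunctions over `ℤ/nℤ`. -/
noncomputable def Psi (n : ℕ) : ℕ :=
  Nat.card {f : ZMod n → ZMod n // ∃ p : Polynomial (ZMod n), ∀ x, p.eval x = f x}

open Polynomial

private lemma hom_eval' {R S : Type*} [CommRing R] [CommRing S] (g : R →+* S)
    (p : R[X]) (x : R) : g (p.eval x) = (p.map g).eval (g x) := by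
  rw [eval_map, eval₂_at_apply]

private lemma card_poly_prod {R S T : Type*} [CommRing R] [CommRing S] [CommRing T]
    (e : R ≃+* S × T) :
    Nat.card {f : R → R // ∃ p : R[X], ∀ x, p.eval x = f x} =
    Nat.card {f : S → S // ∃ p : S[X], ∀ x, p.eval x = f x} *
    Nat.card {f : T → T // ∃ p : T[X], ∀ x, p.eval x = f x} := by
  rw [← Nat.card_prod]
  apply Nat.card_congr
  set π₁ : R →+* S := (RingHom.fst S T).comp e.toRingHom with hπ₁
  set π₂ : R →+* T := (RingHom.snd S T).comp e.toRingHom with hπ₂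
  have hπ₁e : ∀ r, π₁ r = (e r).1 := fun r => rfl
  have hπ₂e : ∀ r, π₂ r = (e r).2 := fun r => rfl
  -- forward data
  have hA₁ : ∀ (p : R[X]) (x : S),
      (e (p.eval (e.symm (x, 0)))).1 = (p.map π₁).eval x := by
    intro p x
    rw [← hπ₁e, hom_eval' π₁, hπ₁e, e.apply_symm_apply]
  have hA₂ : ∀ (p : R[X]) (y : T),
      (e (p.eval (e.symm (0, y)))).2 = (p.map π₂).eval y := by
    intro p y
    rw [← hπ₂e, hom_eval' π₂, hπ₂e, e.apply_symm_apply]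
  -- backward polynomial construction
  have hq : ∀ (p₁ : S[X]) (p₂ : T[X]), ∃ q : R[X],
      q.map π₁ = p₁ ∧ q.map π₂ = p₂ := by
    intro p₁ p₂
    refine ⟨(p₁.sum fun i a => C (e.symm (a, 0)) * X ^ i) +
            (p₂.sum fun i b => C (e.symm (0, b)) * X ^ i), ?_, ?_⟩
    · rw [Polynomial.map_add]
      have h1 : (p₁.sum fun i a => C (e.symm (a, 0)) * X ^ i).map π₁ = p₁ := by
        rw [Polynomial.sum_def, Polynomial.map_sum]
        simp only [Polynomial.map_mul, map_C, Polynomial.map_pow, map_X]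
        simp only [hπ₁e, e.apply_symm_apply]
        exact sum_C_mul_X_pow_eq p₁
      have h2 : (p₂.sum fun i b => C (e.symm (0, b)) * X ^ i).map π₁ = 0 := by
        rw [Polynomial.sum_def, Polynomial.map_sum]
        simp [hπ₁e, e.apply_symm_apply]
      rw [h1, h2, add_zero]
    · rw [Polynomial.map_add]
      have h1 : (p₁.sum fun i a => C (e.symm (a, 0)) * X ^ i).map π₂ = 0 := by
        rw [Polynomial.sum_def, Polynomial.map_sum]
        simp [hπ₂e, e.apply_symm_apply]
      have h2 : (p₂.sum fun i b => C (e.symm (0, b)) * X ^ i).map π₂ = p₂ := by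
        rw [Polynomial.sum_def, Polynomial.map_sum]
        simp only [Polynomial.map_mul, map_C, Polynomial.map_pow, map_X]
        simp only [hπ₂e, e.apply_symm_apply]
        exact sum_C_mul_X_pow_eq p₂
      rw [h1, h2, zero_add]
  refine
    { toFun := fun f =>
        (⟨fun x => (e (f.1 (e.symm (x, 0)))).1, ?_⟩,
         ⟨fun y => (e (f.1 (e.symm (0, y)))).2, ?_⟩)
      invFun := fun g =>
        ⟨fun z => e.symm (g.1.1 (e z).1, g.2.1 (e z).2), ?_⟩
      left_inv := ?_
      right_inv := ?_ }
  · obtain ⟨p, hp⟩ := f.2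
    exact ⟨p.map π₁, fun x => by rw [← hA₁, hp]⟩
  · obtain ⟨p, hp⟩ := f.2
    exact ⟨p.map π₂, fun y => by rw [← hA₂, hp]⟩
  · obtain ⟨p₁, hp₁⟩ := g.1.2
    obtain ⟨p₂, hp₂⟩ := g.2.2
    obtain ⟨q, hq₁, hq₂⟩ := hq p₁ p₂
    refine ⟨q, fun z => ?_⟩
    apply e.injective
    rw [e.apply_symm_apply]
    ext
    · rw [← hπ₁e, hom_eval' π₁, hq₁, hp₁, hπ₁e]
    · rw [← hπ₂e, hom_eval' π₂, hq₂, hp₂, hπ₂e]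
  · rintro ⟨f, p, hp⟩
    ext z
    simp only
    apply e.injective
    rw [e.apply_symm_apply]
    ext
    · show (e (f (e.symm ((e z).1, 0)))).1 = (e (f z)).1
      simp only [← hp]
      rw [hA₁, ← hπ₁e (p.eval z), hom_eval' π₁ p z, hπ₁e]
    · show (e (f (e.symm (0, (e z).2)))).2 = (e (f z)).2
      simp only [← hp]
      rw [hA₂, ← hπ₂e (p.eval z), hom_eval' π₂ p z, hπ₂e]
  · rintro ⟨⟨g₁, hg₁⟩, ⟨g₂, hg₂⟩⟩
    ext x
    · simp [e.apply_symm_apply]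
    · simp [e.apply_symm_apply]

/-- `Ψ` is multiplicative: if `gcd m n = 1` then `Ψ(mn) = Ψ(m)Ψ(n)`. -/
theorem Psi_multiplicative (m n : ℕ) (hm : 2 ≤ m) (hn : 2 ≤ n)
    (h : Nat.Coprime m n) : Psi (m * n) = Psi m * Psi n := by
  exact card_poly_prod (ZMod.chineseRemainder h)
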